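/- Let S be a finite semigroup that is a strict left regular band of groups, with idempotent-power map ω (so ω(s·t) = (ω s)·(ω t) for all s,t). If s ∈ S and y ∈ S is idempotent with (ω s)·y = y (i.e. s^ω ≤ y), then s·y = y·s. -/
import Mathlib


/-- In a finite *strict* LRBG, if `y` is idempotent and
`(ω s)·y = y` (i.e. `s^ω ≤ y`), then `s·y = y·s`. -/
theorem strict_lrbg_commutes_with_larger_idempotent {S : Type*} [Semigroup S] [Fintype S]
    (ω : S → S)
    (hidem : ∀ s : S, ω s * ω s = ω s)
    (hpow : ∀ s : S, ∃ n : ℕ, ω s = (fun t => t * s)^[n] s)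
    (lrbg1 : ∀ s : S, ω s * s = s)
    (lrbg2 : ∀ s t : S, s * t * ω s = s * t)
    (hstrict : ∀ s t : S, ω (s * t) = ω s * ω t) :
    ∀ s y : S, y * y = y → ω s * y = y → s * y = y * s := by
  intro s y hy hle
  -- ω y = y
  have hωy : ω y = y := by
    obtain ⟨n, hn⟩ := hpow y
    have hfix : ∀ m : ℕ, (fun t => t * y)^[m] y = y := by
      intro m
      induction m with
      | zero => rfl
      | succ k ih => rw [Function.iterate_succ_apply', ih, hy]
    rw [hn, hfix]
  have hωsy : ω (s * y) = y := by rw [hstrict, hωy, hle]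
  have h1 : y * (s * y) = s * y := by
    have := lrbg1 (s * y); rwa [hωsy] at this
  have h2 : y * s * y = y * s := by
    have := lrbg2 y s; rwa [hωy] at this
  rw [← h1, ← mul_assoc, h2]
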